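/- Let (ξ_i)_{i=1}^n be a martingale difference sequence adapted to a filtration (F_i), with |ξ_i| ≤ B almost surely and E[ξ_i² | F_{i−1}] ≤ σ² almost surely. Then for all λ ∈ (0, 1/B), E[exp(λ Σ_{i=1}^n ξ_i)] ≤ exp( n λ² σ² / (1 − λB) ). -/

import Mathlib

open MeasureTheory
open scoped BigOperators

lemma exp_le_one_add_add_sq {y : ℝ} (hy : |y| ≤ 1) : Real.exp y ≤ 1 + y + y ^ 2 := by
  have h := Real.exp_bound hy (n := 2) (by norm_num)
  have hs : ∑ m ∈ Finset.range 2, y ^ m / m.factorial = 1 + y := by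
    simp [Finset.sum_range_succ]
  rw [hs] at h
  have h2 : |y| ^ 2 = y ^ 2 := sq_abs y
  rw [h2] at h
  norm_num at h
  have h3 := abs_sub_le_iff.mp h
  nlinarith [sq_nonneg y, h3.1]

theorem stmt11 {Ω : Type*} {m0 : MeasurableSpace Ω} (μ : Measure Ω)
    [IsProbabilityMeasure μ] (F : Filtration ℕ m0)
    (n : ℕ) (ξ : ℕ → Ω → ℝ) (B σ : ℝ) (hB : 0 < B)
    (hadp : ∀ i, StronglyMeasurable[F i] (ξ i))
    (hmd : ∀ i, μ[ξ (i + 1)|F i] =ᵐ[μ] 0)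
    (hbdd : ∀ i, ∀ᵐ ω ∂μ, |ξ (i + 1) ω| ≤ B)
    (hvar : ∀ i, ∀ᵐ ω ∂μ, (μ[fun ω => (ξ (i + 1) ω) ^ 2|F i]) ω ≤ σ ^ 2)
    (lam : ℝ) (hlam0 : 0 < lam) (hlam : lam < 1 / B) :
    ∫ ω, Real.exp (lam * ∑ i ∈ Finset.range n, ξ (i + 1) ω) ∂μ
      ≤ Real.exp (n * lam ^ 2 * σ ^ 2 / (1 - lam * B)) := by
  have hFle : ∀ i, (F i : MeasurableSpace Ω) ≤ m0 := fun i => F.le i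
  have hmeas : ∀ i, Measurable (ξ (i + 1)) := fun i =>
    ((hadp (i + 1)).mono (hFle (i + 1))).measurable
  have ha1 : lam * B < 1 := (lt_div_iff₀ hB).mp hlam
  have h1a : 0 < 1 - lam * B := by linarith
  set c : ℝ := lam ^ 2 * σ ^ 2 / (1 - lam * B) with hc
  -- integrability facts
  have hintξ : ∀ i, Integrable (ξ (i + 1)) μ := by
    intro i
    refine Integrable.mono' (integrable_const B) (hmeas i).aestronglyMeasurable ?_
    filter_upwards [hbdd i] with ω h using by simpa [Real.norm_eq_abs] using h
  have hintξ2 : ∀ i, Integrable (fun ω => ξ (i + 1) ω ^ 2) μ := by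
    intro i
    refine Integrable.mono' (integrable_const (B ^ 2))
      ((hmeas i).pow_const 2).aestronglyMeasurable ?_
    filter_upwards [hbdd i] with ω h
    have h2 : |ξ (i + 1) ω| ^ 2 ≤ B ^ 2 := pow_le_pow_left₀ (abs_nonneg _) h 2
    simpa [Real.norm_eq_abs, abs_pow] using h2
  have hintY : ∀ i, Integrable (fun ω => Real.exp (lam * ξ (i + 1) ω)) μ := by
    intro i
    refine Integrable.mono' (integrable_const (Real.exp (lam * B)))
      (((hmeas i).const_mul lam).exp).aestronglyMeasurable ?_
    filter_upwards [hbdd i] with ω h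
    rw [Real.norm_eq_abs, Real.abs_exp]
    exact Real.exp_le_exp.mpr
      (mul_le_mul_of_nonneg_left (le_trans (le_abs_self _) h) hlam0.le)
  -- partial sums
  have hSsm : ∀ N, StronglyMeasurable[F N]
      (fun ω => ∑ i ∈ Finset.range N, ξ (i + 1) ω) := by
    intro N
    apply Finset.stronglyMeasurable_fun_sum
    intro i hi
    exact (hadp (i + 1)).mono (F.mono (Nat.succ_le_of_lt (Finset.mem_range.mp hi)))
  have hexpSsm : ∀ N, StronglyMeasurable[F N]
      (fun ω => Real.exp (lam * ∑ i ∈ Finset.range N, ξ (i + 1) ω)) := fun N =>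
    Real.continuous_exp.comp_stronglyMeasurable ((hSsm N).const_mul lam)
  have hfbdd : ∀ N, ∀ᵐ ω ∂μ,
      ‖Real.exp (lam * ∑ i ∈ Finset.range N, ξ (i + 1) ω)‖ ≤ Real.exp (lam * (N * B)) := by
    intro N
    have hb : ∀ᵐ ω ∂μ, ∀ i, |ξ (i + 1) ω| ≤ B := (ae_all_iff).mpr hbdd
    filter_upwards [hb] with ω h
    rw [Real.norm_eq_abs, Real.abs_exp]
    apply Real.exp_le_exp.mpr
    apply mul_le_mul_of_nonneg_left _ hlam0.le
    calc ∑ i ∈ Finset.range N, ξ (i + 1) ω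
        ≤ |∑ i ∈ Finset.range N, ξ (i + 1) ω| := le_abs_self _
      _ ≤ ∑ i ∈ Finset.range N, |ξ (i + 1) ω| := Finset.abs_sum_le_sum_abs _ _
      _ ≤ ∑ i ∈ Finset.range N, B := Finset.sum_le_sum fun i _ => h i
      _ = N * B := by simp [mul_comm]
  have hintexpS : ∀ N, Integrable
      (fun ω => Real.exp (lam * ∑ i ∈ Finset.range N, ξ (i + 1) ω)) μ := fun N =>
    Integrable.mono' (integrable_const _) ((hexpSsm N).mono (hFle N)).aestronglyMeasurable
      (hfbdd N)
  -- the key conditional bound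
  have hcond : ∀ N, μ[(fun ω => Real.exp (lam * ξ (N + 1) ω))|F N] ≤ᵐ[μ]
      fun _ => Real.exp c := by
    intro N
    set g : Ω → ℝ := (fun _ => (1 : ℝ)) + lam • ξ (N + 1)
      + (lam ^ 2 / (1 - lam * B)) • (fun ω => ξ (N + 1) ω ^ 2) with hg
    have hint1 : Integrable ((fun _ => (1 : ℝ)) + lam • ξ (N + 1)) μ :=
      (integrable_const 1).add ((hintξ N).smul lam)
    have hint2 : Integrable ((lam ^ 2 / (1 - lam * B)) • (fun ω => ξ (N + 1) ω ^ 2)) μ :=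
      (hintξ2 N).smul _
    have hintg : Integrable g μ := hint1.add hint2
    have hle : (fun ω => Real.exp (lam * ξ (N + 1) ω)) ≤ᵐ[μ] g := by
      filter_upwards [hbdd N] with ω h
      have hy : |lam * ξ (N + 1) ω| ≤ 1 := by
        rw [abs_mul, abs_of_pos hlam0]
        nlinarith
      have hq := exp_le_one_add_add_sq hy
      have hsq : (lam * ξ (N + 1) ω) ^ 2 ≤ lam ^ 2 / (1 - lam * B) * ξ (N + 1) ω ^ 2 := by
        rw [mul_pow]
        apply mul_le_mul_of_nonneg_right _ (sq_nonneg _)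
        rw [le_div_iff₀ h1a]
        nlinarith [sq_nonneg lam, mul_pos hlam0 hB]
      simp only [hg, Pi.add_apply, Pi.smul_apply, smul_eq_mul]
      nlinarith
    have hmono := condExp_mono (m := F N) (hintY N) hintg hle
    have he1 : μ[g|F N] =ᵐ[μ] μ[(fun _ => (1 : ℝ)) + lam • ξ (N + 1)|F N]
        + μ[(lam ^ 2 / (1 - lam * B)) • (fun ω => ξ (N + 1) ω ^ 2)|F N] :=
      condExp_add hint1 hint2 _
    have he2 : μ[(fun _ => (1 : ℝ)) + lam • ξ (N + 1)|F N] =ᵐ[μ]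
        μ[(fun _ => (1 : ℝ))|F N] + μ[lam • ξ (N + 1)|F N] :=
      condExp_add (integrable_const 1) ((hintξ N).smul lam) _
    have he3 : μ[(fun _ => (1 : ℝ))|F N] = fun _ => (1 : ℝ) := condExp_const (hFle N) 1
    have he4 := condExp_smul (μ := μ) (m := F N) lam (ξ (N + 1))
    have he5 := condExp_smul (μ := μ) (m := F N) (lam ^ 2 / (1 - lam * B))
      (fun ω => ξ (N + 1) ω ^ 2)
    filter_upwards [hmono, he1, he2, he4, he5, hmd N, hvar N] with ω h1 h2 h3 h4 h5 h6 h7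
    simp only [Pi.add_apply, Pi.smul_apply, smul_eq_mul, Pi.zero_apply] at h2 h3 h4 h5 h6
    have hc3 : (μ[(fun _ => (1 : ℝ))|F N]) ω = 1 := by rw [he3]
    have hfin : (μ[(fun ω => Real.exp (lam * ξ (N + 1) ω))|F N]) ω ≤ 1 + c := by
      calc (μ[(fun ω => Real.exp (lam * ξ (N + 1) ω))|F N]) ω
          ≤ (μ[g|F N]) ω := h1
        _ = 1 + lam * (μ[ξ (N + 1)|F N]) ω
            + lam ^ 2 / (1 - lam * B) * (μ[fun ω => ξ (N + 1) ω ^ 2|F N]) ω := by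
            rw [h2, h3, hc3, h4, h5]
        _ = 1 + lam ^ 2 / (1 - lam * B) * (μ[fun ω => ξ (N + 1) ω ^ 2|F N]) ω := by
            rw [h6]; ring
        _ ≤ 1 + lam ^ 2 / (1 - lam * B) * σ ^ 2 := by
            have hnn : 0 ≤ lam ^ 2 / (1 - lam * B) := div_nonneg (sq_nonneg _) h1a.le
            nlinarith
        _ = 1 + c := by rw [hc]; ring
    exact hfin.trans (by linarith [Real.add_one_le_exp c])
  -- main induction
  have key : ∀ N, ∫ ω, Real.exp (lam * ∑ i ∈ Finset.range N, ξ (i + 1) ω) ∂μ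
      ≤ Real.exp (N * c) := by
    intro N
    induction N with
    | zero => simp
    | succ N ih =>
      have hsplit : ∀ ω, Real.exp (lam * ∑ i ∈ Finset.range (N + 1), ξ (i + 1) ω)
          = Real.exp (lam * ∑ i ∈ Finset.range N, ξ (i + 1) ω)
            * Real.exp (lam * ξ (N + 1) ω) := by
        intro ω
        rw [← Real.exp_add]
        congr 1
        rw [Finset.sum_range_succ]
        ring
      have hfY : Integrable (fun ω =>
          Real.exp (lam * ∑ i ∈ Finset.range N, ξ (i + 1) ω)
            * Real.exp (lam * ξ (N + 1) ω)) μ :=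
        (hintY N).bdd_mul ((hexpSsm N).mono (hFle N)).aestronglyMeasurable (hfbdd N)
      have hfY' : Integrable ((fun ω =>
          Real.exp (lam * ∑ i ∈ Finset.range N, ξ (i + 1) ω))
            * (fun ω => Real.exp (lam * ξ (N + 1) ω))) μ := hfY
      calc ∫ ω, Real.exp (lam * ∑ i ∈ Finset.range (N + 1), ξ (i + 1) ω) ∂μ
          = ∫ ω, Real.exp (lam * ∑ i ∈ Finset.range N, ξ (i + 1) ω)
              * Real.exp (lam * ξ (N + 1) ω) ∂μ := by
            exact integral_congr_ae (Filter.Eventually.of_forall hsplit)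
        _ = ∫ ω, (μ[(fun ω => Real.exp (lam * ∑ i ∈ Finset.range N, ξ (i + 1) ω))
              * (fun ω => Real.exp (lam * ξ (N + 1) ω))|F N]) ω ∂μ :=
            (integral_condExp (hFle N)).symm
        _ = ∫ ω, Real.exp (lam * ∑ i ∈ Finset.range N, ξ (i + 1) ω)
              * (μ[(fun ω => Real.exp (lam * ξ (N + 1) ω))|F N]) ω ∂μ := by
            refine integral_congr_ae ?_
            filter_upwards [condExp_mul_of_stronglyMeasurable_left (hexpSsm N) hfY' (hintY N)]
              with ω h
            rw [h]; rfl
        _ ≤ ∫ ω, Real.exp (lam * ∑ i ∈ Finset.range N, ξ (i + 1) ω) * Real.exp c ∂μ := by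
            refine integral_mono_ae ?_ ((hintexpS N).mul_const _) ?_
            · exact integrable_condExp.bdd_mul
                ((hexpSsm N).mono (hFle N)).aestronglyMeasurable (hfbdd N)
            · filter_upwards [hcond N] with ω h
              exact mul_le_mul_of_nonneg_left h (Real.exp_nonneg _)
        _ = (∫ ω, Real.exp (lam * ∑ i ∈ Finset.range N, ξ (i + 1) ω) ∂μ)
              * Real.exp c := integral_mul_const _ _
        _ ≤ Real.exp (N * c) * Real.exp c :=
            mul_le_mul_of_nonneg_right ih (Real.exp_nonneg _)
        _ = Real.exp ((N + 1 : ℕ) * c) := by rw [← Real.exp_add]; push_cast; ring_nf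
  refine (key n).trans (le_of_eq ?_)
  rw [hc]
  ring_nf
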